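/- Let n ≥ 1, let d > 0, let (x_i)_{i∈ℕ} be a sequence in ℝ^n, and let q : ℝ^n → [0, ∞) be continuous with q(t • x) = t² · q(x) for all t > 0 and all x, and suppose q(x_i) = q(x_0) for all i. For L > 0 set ν_L = L^{−d} ∑_i δ_{x_i / L}, and assume that for every compact C ⊆ ℝ^n one has sup_{L ≥ 1} ν_L(C) < ∞. Suppose L_j → ∞ is a sequence and ν is a locally finite Borel measure on ℝ^n such that ∫ g dν_{L_j} → ∫ g dν for every continuous compactly supported g : ℝ^n → ℝ. Then ν({x | q(x) > 0}) = 0, i.e. ν is supported on the zero set of q. -/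

import Mathlib

open MeasureTheory Filter Topology

/-- If `q` is a continuous nonnegative 2-homogeneous function which is constant on the
sequence `(xᵢ)`, and the rescaled counting measures `ν_L = L^{-d} ∑ᵢ δ_{xᵢ/L}` have masses
uniformly bounded on compacts and converge vaguely along some sequence `L_j → ∞` to a
locally finite measure `ν`, then `ν` is supported on the zero set of `q`. -/
theorem vague_limit_supported_on_zero_set (n : ℕ) (hn : 1 ≤ n) (d : ℝ) (hd : 0 < d)
    (x : ℕ → EuclideanSpace ℝ (Fin n))
    (q : EuclideanSpace ℝ (Fin n) → ℝ)
    (hq_cont : Continuous q)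
    (hq_nonneg : ∀ y, 0 ≤ q y)
    (hq_hom : ∀ t : ℝ, 0 < t → ∀ y, q (t • y) = t ^ 2 * q y)
    (hq_const : ∀ i, q (x i) = q (x 0))
    (νL : ℝ → Measure (EuclideanSpace ℝ (Fin n)))
    (hνL : ∀ L : ℝ, νL L =
      ENNReal.ofReal (L ^ (-d)) • Measure.sum (fun i : ℕ => Measure.dirac (L⁻¹ • x i)))
    (h_bdd : ∀ C : Set (EuclideanSpace ℝ (Fin n)), IsCompact C →
      ∃ M : ENNReal, M < ⊤ ∧ ∀ L : ℝ, 1 ≤ L → νL L C ≤ M)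
    (Lseq : ℕ → ℝ) (hLseq : Tendsto Lseq atTop atTop)
    (ν : Measure (EuclideanSpace ℝ (Fin n)))
    [IsLocallyFiniteMeasure ν]
    (h_conv : ∀ g : EuclideanSpace ℝ (Fin n) → ℝ, Continuous g → HasCompactSupport g →
      Tendsto (fun j => ∫ y, g y ∂(νL (Lseq j))) atTop (𝓝 (∫ y, g y ∂ν))) :
    ν {y : EuclideanSpace ℝ (Fin n) | 0 < q y} = 0 := by
  -- key lemma: ν of any compact set inside {q > ε} with ε > 0 is zero
  set c : ℝ := q (x 0) with hc
  have key : ∀ (K : Set (EuclideanSpace ℝ (Fin n))) (ε : ℝ), 0 < ε → IsCompact K →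
      K ⊆ {y | ε < q y} → ν K = 0 := by
    intro K ε hε hK hKsub
    -- Urysohn function
    obtain ⟨g, hg1, hg0, hgsupp, hg01⟩ :=
      exists_continuous_one_zero_of_isCompact hK
        (isClosed_le hq_cont continuous_const : IsClosed {y | q y ≤ ε})
        (by
          rw [Set.disjoint_left]
          intro y hy hy'
          have h := hKsub hy
          simp only [Set.mem_setOf_eq] at h hy'
          linarith)
    have hgc : Continuous g := g.continuous
    -- eventually the integral against ν_{Lseq j} is zero
    have hev : ∀ᶠ j in atTop, (∫ y, g y ∂(νL (Lseq j))) = 0 := by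
      have hL0 : ∀ᶠ j in atTop, max 1 (Real.sqrt (c / ε) + 1) ≤ Lseq j :=
        hLseq.eventually_ge_atTop _
      filter_upwards [hL0] with j hj
      set L := Lseq j with hLdef
      have hL1 : (1 : ℝ) ≤ L := le_trans (le_max_left _ _) hj
      have hLpos : 0 < L := lt_of_lt_of_le one_pos hL1
      have hLs : Real.sqrt (c / ε) < L :=
        lt_of_lt_of_le (lt_add_of_pos_right _ one_pos) (le_trans (le_max_right _ _) hj)
      -- q at rescaled points is < ε
      have hqsmall : ∀ i, q (L⁻¹ • x i) ≤ ε := by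
        intro i
        have h1 : q (L⁻¹ • x i) = L⁻¹ ^ 2 * c := by
          rw [hq_hom L⁻¹ (inv_pos.2 hLpos) (x i), hq_const i]
        have hc0 : 0 ≤ c := hq_nonneg _
        have hL2 : c / ε ≤ L ^ 2 := by
          have := Real.sq_sqrt (div_nonneg hc0 hε.le)
          nlinarith [Real.sqrt_nonneg (c / ε), hLs]
        have : c ≤ ε * L ^ 2 := by
          rw [div_le_iff₀ hε] at hL2; linarith [hL2]
        rw [h1, inv_pow]
        rw [inv_mul_le_iff₀ (by positivity)]
        linarith [this]
      -- so g vanishes at all atoms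
      have hgz : ∀ i, g (L⁻¹ • x i) = 0 := fun i => hg0 (hqsmall i)
      -- hence g = 0 a.e. for ν_L
      have hae : (fun y => g y) =ᵐ[νL L] 0 := by
        rw [Filter.EventuallyEq, ae_iff]
        simp only [Pi.zero_apply]
        have hmeas : MeasurableSet {y : EuclideanSpace ℝ (Fin n) | ¬ g y = (0 : ℝ)} := by
          have : {y : EuclideanSpace ℝ (Fin n) | ¬ g y = (0 : ℝ)} = (fun y => g y) ⁻¹' {0}ᶜ := by
            ext y; simp
          rw [this]
          exact (hgc.measurable) (measurableSet_singleton (0:ℝ)).compl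
        rw [hνL L]
        simp only [Measure.smul_apply, smul_eq_mul]
        rw [Measure.sum_apply _ hmeas]
        have : ∀ i : ℕ, Measure.dirac (L⁻¹ • x i) {y : EuclideanSpace ℝ (Fin n) | ¬ g y = (0 : ℝ)} = 0 := by
          intro i
          rw [Measure.dirac_apply' _ hmeas]
          simp [hgz i]
        simp [this]
      exact integral_eq_zero_of_ae hae
    -- the limit integral is zero
    have hlim : (∫ y, g y ∂ν) = 0 := by
      have h1 := h_conv g hgc hgsupp
      have h2 : Tendsto (fun j => ∫ y, g y ∂(νL (Lseq j))) atTop (𝓝 (0:ℝ)) :=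
        Tendsto.congr' (hev.mono fun j hj => hj.symm) tendsto_const_nhds
      exact tendsto_nhds_unique h1 h2
    -- ν K ≤ ∫ g dν
    have hKmeas : MeasurableSet K := hK.measurableSet
    have hνK : ν K < ⊤ := hK.measure_lt_top
    have hind : (ν K).toReal ≤ ∫ y, g y ∂ν := by
      change ν.real K ≤ _
      rw [← integral_indicator_one hKmeas]
      apply integral_mono
      · exact (integrable_indicator_iff hKmeas).2
          (integrableOn_const hνK.ne)
      · exact hgc.integrable_of_hasCompactSupport hgsupp
      · intro y
        by_cases hy : y ∈ K
        · simp [Set.indicator_of_mem hy, hg1 hy]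
        · simp [Set.indicator_of_notMem hy, (hg01 y).1]
    rw [hlim] at hind
    have : (ν K).toReal = 0 := le_antisymm hind ENNReal.toReal_nonneg
    rcases (ENNReal.toReal_eq_zero_iff _).1 this with h | h
    · exact h
    · exact absurd h hνK.ne
  -- compact exhaustion of {q > 0}
  set Km : ℕ → Set (EuclideanSpace ℝ (Fin n)) :=
    fun m => Metric.closedBall 0 m ∩ {y | 1 / (m + 1 : ℝ) ≤ q y} with hKm
  have hKmzero : ∀ m, ν (Km m) = 0 := by
    intro m
    apply key (Km m) (1 / (m + 2 : ℝ)) (by positivity)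
    · exact (isCompact_closedBall 0 m).inter_right
        (isClosed_le continuous_const hq_cont)
    · intro y hy
      have h1 : 1 / (m + 1 : ℝ) ≤ q y := hy.2
      have h2 : 1 / (m + 2 : ℝ) < 1 / (m + 1 : ℝ) := by
        exact one_div_lt_one_div_of_lt (by positivity) (by linarith)
      exact lt_of_lt_of_le h2 h1
  have hcover : {y : EuclideanSpace ℝ (Fin n) | 0 < q y} ⊆ ⋃ m, Km m := by
    intro y hy
    obtain ⟨m, hm1, hm2⟩ : ∃ m : ℕ, ‖y‖ ≤ m ∧ 1 / q y ≤ m := by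
      obtain ⟨m, hm⟩ := exists_nat_ge (max ‖y‖ (1 / q y))
      exact ⟨m, (le_max_left _ _).trans hm, (le_max_right _ _).trans hm⟩
    refine Set.mem_iUnion.2 ⟨m, ?_, ?_⟩
    · simpa [Metric.mem_closedBall, dist_zero_right] using hm1
    · have hqy : 0 < q y := hy
      have : 1 / q y ≤ (m : ℝ) + 1 := le_trans hm2 (by linarith)
      rw [Set.mem_setOf_eq, div_le_iff₀ (by positivity)]
      rw [div_le_iff₀ hqy] at this
      linarith
  refine le_antisymm ?_ (by simp)
  calc ν {y : EuclideanSpace ℝ (Fin n) | 0 < q y} ≤ ν (⋃ m, Km m) := measure_mono hcover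
    _ ≤ ∑' m, ν (Km m) := measure_iUnion_le _
    _ = 0 := by simp [hKmzero]
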